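/- Let U ⊆ ℂ be open and let W, X, λ, γ : U → ℂ be differentiable functions (with λ, γ real-valued) satisfying the Wirtinger equations ∂_w̄ X = -W ∂_w̄(λ - γ) and ∂_w̄ W = -X ∂_w̄(λ - γ). Then ∂_w̄((W + X)e^{λ-γ}) = 0 and ∂_w̄((W - X)e^{-(λ-γ)}) = 0; that is, (W+X)e^{λ-γ} and (W-X)e^{γ-λ} are holomorphic on U. -/

import Mathlib

/-- The Wirtinger derivative ∂/∂w̄ of a map g : ℂ → ℂ, viewed as a map of
real Fréchet-differentiable functions: ∂_w̄ g = (1/2)(∂_u g + i ∂_v g). -/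
noncomputable def dbar (g : ℂ → ℂ) (z : ℂ) : ℂ :=
  (1 / 2) * (fderiv ℝ g z 1 + Complex.I * fderiv ℝ g z Complex.I)

lemma dbar_mul (f g : ℂ → ℂ) (z : ℂ) (hf : DifferentiableAt ℝ f z)
    (hg : DifferentiableAt ℝ g z) :
    dbar (fun w => f w * g w) z = f z * dbar g z + g z * dbar f z := by
  unfold dbar
  rw [fderiv_fun_mul hf hg]
  simp [ContinuousLinearMap.add_apply, ContinuousLinearMap.smul_apply, smul_eq_mul]
  ring

lemma dbar_add (f g : ℂ → ℂ) (z : ℂ) (hf : DifferentiableAt ℝ f z)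
    (hg : DifferentiableAt ℝ g z) :
    dbar (fun w => f w + g w) z = dbar f z + dbar g z := by
  unfold dbar
  rw [fderiv_fun_add hf hg]
  simp [ContinuousLinearMap.add_apply]
  ring

lemma dbar_sub (f g : ℂ → ℂ) (z : ℂ) (hf : DifferentiableAt ℝ f z)
    (hg : DifferentiableAt ℝ g z) :
    dbar (fun w => f w - g w) z = dbar f z - dbar g z := by
  unfold dbar
  rw [fderiv_fun_sub hf hg]
  simp [ContinuousLinearMap.sub_apply]
  ring

lemma dbar_neg (f : ℂ → ℂ) (z : ℂ) :
    dbar (fun w => -(f w)) z = -dbar f z := by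
  unfold dbar
  rw [fderiv_fun_neg]
  simp
  ring

lemma dbar_exp_comp (f : ℂ → ℂ) (z : ℂ) (hf : DifferentiableAt ℝ f z) :
    dbar (fun w => Complex.exp (f w)) z = Complex.exp (f z) * dbar f z := by
  have h := ((Complex.hasDerivAt_exp (f z)).hasFDerivAt.restrictScalars ℝ).comp z
      hf.hasFDerivAt
  unfold dbar
  rw [show (fun w => Complex.exp (f w)) = Complex.exp ∘ f from rfl, h.fderiv]
  simp [ContinuousLinearMap.comp_apply, smul_eq_mul]
  ring

/-- If W, X : U → ℂ and λ, γ : U → ℝ are C¹ on an open U ⊆ ℂ and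
∂_w̄ X = -W ∂_w̄(λ-γ), ∂_w̄ W = -X ∂_w̄(λ-γ) hold on U, then
∂_w̄((W+X)e^{λ-γ}) = 0 and ∂_w̄((W-X)e^{-(λ-γ)}) = 0 on U, i.e. (W+X)e^{λ-γ}
and (W-X)e^{γ-λ} are holomorphic on U. -/
theorem stmt_17 (U : Set ℂ) (hU : IsOpen U)
    (W X : ℂ → ℂ) (lam gam : ℂ → ℝ)
    (hW : ContDiffOn ℝ 1 W U) (hX : ContDiffOn ℝ 1 X U)
    (hlam : ContDiffOn ℝ 1 lam U) (hgam : ContDiffOn ℝ 1 gam U)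
    (heqX : ∀ z ∈ U, dbar X z = -(W z) * dbar (fun w => ((lam w - gam w : ℝ) : ℂ)) z)
    (heqW : ∀ z ∈ U, dbar W z = -(X z) * dbar (fun w => ((lam w - gam w : ℝ) : ℂ)) z) :
    ∀ z ∈ U,
      dbar (fun w => (W w + X w) * Complex.exp ((lam w - gam w : ℝ) : ℂ)) z = 0 ∧
      dbar (fun w => (W w - X w) * Complex.exp (-((lam w - gam w : ℝ) : ℂ))) z = 0 := by
  intro z hz
  have hnh := hU.mem_nhds hz
  have hWz : DifferentiableAt ℝ W z :=
    (hW.differentiableOn one_ne_zero).differentiableAt hnh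
  have hXz : DifferentiableAt ℝ X z :=
    (hX.differentiableOn one_ne_zero).differentiableAt hnh
  have hlamz : DifferentiableAt ℝ lam z :=
    (hlam.differentiableOn one_ne_zero).differentiableAt hnh
  have hgamz : DifferentiableAt ℝ gam z :=
    (hgam.differentiableOn one_ne_zero).differentiableAt hnh
  set φ : ℂ → ℂ := fun w => ((lam w - gam w : ℝ) : ℂ) with hφdef
  have hφz : DifferentiableAt ℝ φ z :=
    Complex.ofRealCLM.differentiableAt.comp z (hlamz.sub hgamz)
  set d : ℂ := dbar φ z with hd
  constructor
  · have hE : DifferentiableAt ℝ (fun w => Complex.exp (φ w)) z := by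
      exact ((Complex.differentiable_exp (𝕜 := ℂ)).restrictScalars ℝ).differentiableAt.comp z hφz
    show dbar (fun w => (W w + X w) * Complex.exp (φ w)) z = 0
    rw [dbar_mul (fun w => W w + X w) (fun w => Complex.exp (φ w)) z (hWz.add hXz) hE, dbar_exp_comp φ z hφz,
      dbar_add W X z hWz hXz, heqW z hz, heqX z hz]
    ring
  · have hφn : DifferentiableAt ℝ (fun w => -(φ w)) z := hφz.neg
    have hE : DifferentiableAt ℝ (fun w => Complex.exp (-(φ w))) z := by
      exact ((Complex.differentiable_exp (𝕜 := ℂ)).restrictScalars ℝ).differentiableAt.comp z hφn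
    show dbar (fun w => (W w - X w) * Complex.exp (-(φ w))) z = 0
    rw [dbar_mul (fun w => W w - X w) (fun w => Complex.exp (-(φ w))) z (hWz.sub hXz) hE, dbar_exp_comp (fun w => -(φ w)) z hφn,
      dbar_neg φ z, dbar_sub W X z hWz hXz, heqW z hz, heqX z hz]
    ring
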